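/- Let 1 ≤ m ≤ n and ∅ ≠ A ⊆ [m], and set D = 𝔽₂ⁿ ∖ {x ∈ 𝔽₂ⁿ : supp(x) ⊆ A}. Then |D| = 2ⁿ − 2^{|A|}; wt(c_{D,0}) = 0; for every nonzero u ∈ 𝔽₂ⁿ, wt(c_{D,u}) = 2^{n−1} if supp(u) ∩ A = ∅ and wt(c_{D,u}) = 2^{n−1} − 2^{|A|−1} otherwise. Consequently exactly 2^{n−|A|} − 1 nonzero vectors u give weight 2^{n−1} and exactly 2ⁿ − 2^{n−|A|} vectors u give weight 2^{n−1} − 2^{|A|−1}. -/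

import Mathlib

open Finset

/-- The order relation of the hierarchical poset `ℍ(m,n)` on `Fin n`:
`i ⪯ j` iff `i = j`, or `i` lies in the bottom level `[m]` and `j` in the top level. -/
def Hle (n m : ℕ) (i j : Fin n) : Prop :=
  i = j ∨ ((i : ℕ) < m ∧ m ≤ (j : ℕ))

instance (n m : ℕ) : DecidableRel (Hle n m) := fun i j =>
  decidable_of_iff (i = j ∨ ((i : ℕ) < m ∧ m ≤ (j : ℕ))) Iff.rfl

/-- Down-closed subsets of the hierarchical poset `ℍ(m,n)`. -/
def HDownClosed (n m : ℕ) (S : Finset (Fin n)) : Prop :=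
  ∀ i j : Fin n, Hle n m i j → j ∈ S → i ∈ S

instance (n m : ℕ) : DecidablePred (HDownClosed n m) := fun S =>
  decidable_of_iff (∀ i j : Fin n, Hle n m i j → j ∈ S → i ∈ S) Iff.rfl

/-- The bottom level `[m]` of `ℍ(m,n)`, viewed inside `Fin n`. -/
def lowSet (n m : ℕ) : Finset (Fin n) :=
  Finset.univ.filter (fun i => (i : ℕ) < m)

/-- The support of a vector of `𝔽₂ⁿ`, as a subset of `[n]`. -/
def supp {n : ℕ} (x : Fin n → ZMod 2) : Finset (Fin n) :=
  Finset.univ.filter (fun i => x i ≠ 0)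

/-- The standard inner product on `𝔽₂ⁿ`. -/
def ip {n : ℕ} (u x : Fin n → ZMod 2) : ZMod 2 := ∑ i, u i * x i

/-- The Hamming weight of the codeword `c_{D,u} = (u·x)_{x ∈ D}`. -/
def wtD {n : ℕ} (D : Finset (Fin n → ZMod 2)) (u : Fin n → ZMod 2) : ℕ :=
  (D.filter (fun x => ip u x = 1)).card

/-- The Hamming weight of the codeword `c_f(s,u) = (s·f(x) + u·x)_{x ∈ 𝔽₂ⁿ ∖ {0}}`. -/
def wtF {n : ℕ} (f : (Fin n → ZMod 2) → ZMod 2) (s : ZMod 2) (u : Fin n → ZMod 2) : ℕ :=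
  (Finset.univ.filter (fun x : Fin n → ZMod 2 => x ≠ 0 ∧ s * f x + ip u x = 1)).card

/-- The Hamming weight of the first `m` coordinates of `u` (the part `v` of `u = (v,w)`). -/
def wtLow (n m : ℕ) (u : Fin n → ZMod 2) : ℕ :=
  (Finset.univ.filter (fun i : Fin n => (i : ℕ) < m ∧ u i ≠ 0)).card

section helpers
variable {n : ℕ}

lemma zmod2_cases : ∀ a : ZMod 2, a = 0 ∨ a = 1 := by decide

lemma zmod2_add_self : ∀ a : ZMod 2, a + a = 0 := by decide

lemma ip_add_right (u x y : Fin n → ZMod 2) : ip u (x + y) = ip u x + ip u y := by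
  simp [ip, mul_add, Finset.sum_add_distrib]

lemma ip_single (u : Fin n → ZMod 2) (i : Fin n) : ip u (Pi.single i 1) = u i := by
  simp [ip, Pi.single_apply, mul_ite]

lemma flip_flip' (x s : Fin n → ZMod 2) : x + s + s = x := by
  funext j
  rw [Pi.add_apply, Pi.add_apply, add_assoc, zmod2_add_self, add_zero]

lemma supp_subset_iff (x : Fin n → ZMod 2) (A : Finset (Fin n)) :
    supp x ⊆ A ↔ ∀ i ∉ A, x i = 0 := by
  simp only [supp, Finset.subset_iff, mem_filter, mem_univ, true_and]
  constructor
  · intro h i hi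
    by_contra hx
    exact hi (h hx)
  · intro h i hx
    by_contra hi
    exact hx (h i hi)

lemma card_vanish (B : Finset (Fin n)) :
    (univ.filter (fun x : Fin n → ZMod 2 => ∀ i ∉ B, x i = 0)).card = 2 ^ B.card := by
  rw [← Fintype.card_subtype]
  have e : {x : Fin n → ZMod 2 // ∀ i ∉ B, x i = 0} ≃ (B → ZMod 2) :=
    { toFun := fun x i => x.1 i
      invFun := fun f => ⟨fun i => if h : i ∈ B then f ⟨i, h⟩ else 0,
        fun i hi => dif_neg hi⟩
      left_inv := by
        intro x
        ext i
        by_cases h : i ∈ B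
        · simp [h]
        · simp [h, x.2 i h]
      right_inv := by
        intro f
        funext i
        simp }
  rw [Fintype.card_congr e]
  simp [Fintype.card_fun]

lemma double_count (u : Fin n → ZMod 2) (i : Fin n) (hui : u i = 1)
    (S : Finset (Fin n → ZMod 2)) (hS : ∀ x ∈ S, x + Pi.single i 1 ∈ S) :
    2 * (S.filter (fun x => ip u x = 1)).card = S.card := by
  have key : (S.filter (fun x => ip u x = 1)).card
      = (S.filter (fun x => ¬ ip u x = 1)).card := by
    apply Finset.card_bij (fun x _ => x + Pi.single i 1)
    · intro x hx
      simp only [mem_filter] at hx ⊢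
      refine ⟨hS x hx.1, ?_⟩
      rw [ip_add_right, ip_single, hui, hx.2]
      decide
    · intro x hx y hy h
      have := congrArg (fun z => z + Pi.single i 1) h
      simpa [flip_flip'] using this
    · intro y hy
      simp only [mem_filter] at hy
      refine ⟨y + Pi.single i 1, ?_, flip_flip' y _⟩
      simp only [mem_filter]
      refine ⟨hS y hy.1, ?_⟩
      rw [ip_add_right, ip_single, hui]
      rcases zmod2_cases (ip u y) with h | h
      · rw [h]; decide
      · exact absurd h hy.2
  have h2 := Finset.card_filter_add_card_filter_not
    (s := S) (p := fun x => ip u x = 1)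
  omega

end helpers

theorem stmt_4 (n m : ℕ) (hm : 1 ≤ m) (hmn : m ≤ n)
    (A : Finset (Fin n)) (hAne : A.Nonempty) (hA : ∀ i ∈ A, (i : ℕ) < m)
    (D : Finset (Fin n → ZMod 2))
    (hD : D = Finset.univ.filter (fun x => ¬ supp x ⊆ A)) :
    D.card = 2 ^ n - 2 ^ A.card
    ∧ wtD D 0 = 0
    ∧ (∀ u : Fin n → ZMod 2, u ≠ 0 →
        (supp u ∩ A = ∅ → wtD D u = 2 ^ (n - 1)) ∧
        (supp u ∩ A ≠ ∅ → wtD D u = 2 ^ (n - 1) - 2 ^ (A.card - 1)))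
    ∧ (Finset.univ.filter
        (fun u : Fin n → ZMod 2 => u ≠ 0 ∧ wtD D u = 2 ^ (n - 1))).card
        = 2 ^ (n - A.card) - 1
    ∧ (Finset.univ.filter
        (fun u : Fin n → ZMod 2 =>
          u ≠ 0 ∧ wtD D u = 2 ^ (n - 1) - 2 ^ (A.card - 1))).card
        = 2 ^ n - 2 ^ (n - A.card) := by
  have hacard1 : 1 ≤ A.card := hAne.card_pos
  have hacardn : A.card ≤ n := by
    have := Finset.card_le_univ A
    simpa using this
  have hn1 : 1 ≤ n := le_trans hm hmn
  have hpow_low : (2:ℕ) ^ A.card = 2 * 2 ^ (A.card - 1) := by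
    rw [← pow_succ']; congr 1; omega
  have hpow_n : (2:ℕ) ^ n = 2 * 2 ^ (n - 1) := by
    rw [← pow_succ']; congr 1; omega
  have hpow_le : (2:ℕ) ^ (A.card - 1) ≤ 2 ^ (n - 1) :=
    Nat.pow_le_pow_right (by norm_num) (by omega)
  have hpow_pos : 0 < (2:ℕ) ^ (A.card - 1) := Nat.pow_pos (by norm_num)
  have cardS : (univ.filter (fun x : Fin n → ZMod 2 => supp x ⊆ A)).card = 2 ^ A.card := by
    have hfe : univ.filter (fun x : Fin n → ZMod 2 => supp x ⊆ A)
        = univ.filter (fun x : Fin n → ZMod 2 => ∀ i ∉ A, x i = 0) := by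
      ext x
      simp [supp_subset_iff]
    rw [hfe]
    exact card_vanish A
  have carduniv : (univ : Finset (Fin n → ZMod 2)).card = 2 ^ n := by
    simp [Fintype.card_fun]
  have hsplitD := Finset.card_filter_add_card_filter_not
    (s := (univ : Finset (Fin n → ZMod 2))) (p := fun x => supp x ⊆ A)
  have cardD : D.card = 2 ^ n - 2 ^ A.card := by
    rw [hD]; omega
  have split : ∀ u : Fin n → ZMod 2,
      ((univ.filter (fun x => supp x ⊆ A)).filter (fun x => ip u x = 1)).card + wtD D u
      = (univ.filter (fun x : Fin n → ZMod 2 => ip u x = 1)).card := by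
    intro u
    have h := Finset.card_filter_add_card_filter_not
      (s := univ.filter (fun x : Fin n → ZMod 2 => ip u x = 1))
      (p := fun x => supp x ⊆ A)
    have e1 : (univ.filter (fun x : Fin n → ZMod 2 => supp x ⊆ A)).filter
        (fun x => ip u x = 1)
        = (univ.filter (fun x : Fin n → ZMod 2 => ip u x = 1)).filter
          (fun x => supp x ⊆ A) := by
      ext x; simp only [mem_filter]; tauto
    have e2 : (univ.filter (fun x : Fin n → ZMod 2 => ¬ supp x ⊆ A)).filter
        (fun x => ip u x = 1)
        = (univ.filter (fun x : Fin n → ZMod 2 => ip u x = 1)).filter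
          (fun x => ¬ supp x ⊆ A) := by
      ext x; simp only [mem_filter]; tauto
    simp only [wtD, hD]
    rw [e1, e2]
    exact h
  have total : ∀ u : Fin n → ZMod 2, u ≠ 0 →
      (univ.filter (fun x : Fin n → ZMod 2 => ip u x = 1)).card = 2 ^ (n - 1) := by
    intro u hu
    obtain ⟨i, hi⟩ := Function.ne_iff.mp hu
    have hui : u i = 1 := (zmod2_cases (u i)).resolve_left (by simpa using hi)
    have := double_count u i hui univ (fun x _ => mem_univ _)
    omega
  have low : ∀ u : Fin n → ZMod 2, ∀ i ∈ A, u i ≠ 0 →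
      ((univ.filter (fun x => supp x ⊆ A)).filter (fun x => ip u x = 1)).card
        = 2 ^ (A.card - 1) := by
    intro u i hiA hui0
    have hui : u i = 1 := (zmod2_cases (u i)).resolve_left hui0
    have hcl : ∀ x ∈ univ.filter (fun x : Fin n → ZMod 2 => supp x ⊆ A),
        x + Pi.single i 1 ∈ univ.filter (fun x : Fin n → ZMod 2 => supp x ⊆ A) := by
      intro x hx
      simp only [mem_filter, mem_univ, true_and] at hx ⊢
      intro j hj
      simp only [supp, mem_filter, mem_univ, true_and] at hj
      by_cases hji : j = i
      · exact hji ▸ hiA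
      · apply hx
        simp only [supp, mem_filter, mem_univ, true_and]
        intro hxj
        apply hj
        rw [Pi.add_apply, hxj, Pi.single_apply, if_neg hji, add_zero]
    have := double_count u i hui _ hcl
    rw [cardS] at this
    omega
  have lowzero : ∀ u : Fin n → ZMod 2, supp u ∩ A = ∅ →
      ((univ.filter (fun x => supp x ⊆ A)).filter (fun x => ip u x = 1)).card = 0 := by
    intro u hdisj
    rw [Finset.card_eq_zero, Finset.filter_eq_empty_iff]
    intro x hx
    simp only [mem_filter, mem_univ, true_and] at hx
    have h0 : ip u x = 0 := by
      rw [ip]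
      apply Finset.sum_eq_zero
      intro j _
      rcases zmod2_cases (x j) with hxj | hxj
      · rw [hxj, mul_zero]
      · have hjA : j ∈ A := hx (by simp [supp, hxj])
        have hj0 : u j = 0 := by
          by_contra hc
          have : j ∈ supp u ∩ A := by
            simp only [mem_inter, supp, mem_filter, mem_univ, true_and]
            exact ⟨hc, hjA⟩
          rw [hdisj] at this
          exact absurd this (notMem_empty j)
        rw [hj0, zero_mul]
    rw [h0]
    decide
  have suppP : ∀ u : Fin n → ZMod 2, supp u ∩ A = ∅ ↔ ∀ i ∈ A, u i = 0 := by
    intro u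
    simp only [Finset.eq_empty_iff_forall_notMem, mem_inter, supp, mem_filter,
      mem_univ, true_and]
    constructor
    · intro h i hiA
      by_contra hc
      exact h i ⟨hc, hiA⟩
    · rintro h i ⟨hui, hiA⟩
      exact hui (h i hiA)
  have wt1 : ∀ u : Fin n → ZMod 2, u ≠ 0 → supp u ∩ A = ∅ → wtD D u = 2 ^ (n - 1) := by
    intro u hu hd
    have h1 := split u
    rw [lowzero u hd, total u hu] at h1
    omega
  have wt2 : ∀ u : Fin n → ZMod 2, u ≠ 0 → supp u ∩ A ≠ ∅ →
      wtD D u = 2 ^ (n - 1) - 2 ^ (A.card - 1) := by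
    intro u hu hd
    obtain ⟨i, hi⟩ := Finset.nonempty_iff_ne_empty.mpr hd
    simp only [mem_inter, supp, mem_filter, mem_univ, true_and] at hi
    have h1 := split u
    rw [low u i hi.2 hi.1, total u hu] at h1
    omega
  have cardP : (univ.filter (fun u : Fin n → ZMod 2 => ∀ i ∈ A, u i = 0)).card
      = 2 ^ (n - A.card) := by
    have hcompl : Aᶜ.card = n - A.card := by
      rw [Finset.card_compl]
      simp
    have hfe : univ.filter (fun u : Fin n → ZMod 2 => ∀ i ∈ A, u i = 0)
        = univ.filter (fun u : Fin n → ZMod 2 => ∀ i ∉ Aᶜ, u i = 0) := by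
      ext u
      simp [Finset.mem_compl]
    rw [hfe, card_vanish Aᶜ, hcompl]
  have hpow_le2 : (2:ℕ) ^ (n - A.card) ≤ 2 ^ n :=
    Nat.pow_le_pow_right (by norm_num) (Nat.sub_le n A.card)
  refine ⟨cardD, ?_, ?_, ?_, ?_⟩
  · simp [wtD, ip]
  · intro u hu
    exact ⟨wt1 u hu, wt2 u hu⟩
  · have hset : univ.filter (fun u : Fin n → ZMod 2 => u ≠ 0 ∧ wtD D u = 2 ^ (n - 1))
        = (univ.filter (fun u : Fin n → ZMod 2 => ∀ i ∈ A, u i = 0)).erase 0 := by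
      ext u
      simp only [mem_filter, mem_univ, true_and, mem_erase]
      constructor
      · rintro ⟨hu0, hwt⟩
        refine ⟨hu0, ?_⟩
        rw [← suppP]
        by_contra hne
        rw [wt2 u hu0 hne] at hwt
        clear cardP
        omega
      · rintro ⟨hu0, hP⟩
        exact ⟨hu0, wt1 u hu0 ((suppP u).mpr hP)⟩
    rw [hset, Finset.card_erase_of_mem (by simp), cardP]
  · have hset : univ.filter (fun u : Fin n → ZMod 2 =>
        u ≠ 0 ∧ wtD D u = 2 ^ (n - 1) - 2 ^ (A.card - 1))
        = univ.filter (fun u : Fin n → ZMod 2 => ¬ ∀ i ∈ A, u i = 0) := by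
      ext u
      simp only [mem_filter, mem_univ, true_and]
      constructor
      · rintro ⟨hu0, hwt⟩
        intro hP
        rw [wt1 u hu0 ((suppP u).mpr hP)] at hwt
        clear cardP
        omega
      · intro hP
        push_neg at hP
        obtain ⟨i, hiA, hui⟩ := hP
        have hu0 : u ≠ 0 := by
          intro h
          rw [h] at hui
          exact hui rfl
        have hne : supp u ∩ A ≠ ∅ := by
          rw [Ne, suppP]
          push_neg
          exact ⟨i, hiA, hui⟩
        exact ⟨hu0, wt2 u hu0 hne⟩
    rw [hset]
    have h := Finset.card_filter_add_card_filter_not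
      (s := (univ : Finset (Fin n → ZMod 2)))
      (p := fun u => ∀ i ∈ A, u i = 0)
    rw [cardP, carduniv] at h
    exact Nat.eq_sub_of_add_eq' h
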